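/- Let m > 0 and H₀ ≥ 0 be real constants, and let Φ : ℝ → ℝ be twice continuously differentiable. Suppose Φ satisfies the Klein–Gordon equation Φ''(t) + 3H₀·Φ'(t) + m²·Φ(t) = 0 for all t, and the Einstein constraint 3H₀² = 8π(Φ'(t)² + m²Φ(t)²) for all t. Then H₀ = 0 and Φ(t) = 0 for all t. -/

import Mathlib

open Real

/-- Strict slow rolling (constant Hubble parameter `H₀`) together with the
Klein–Gordon and Einstein equations yields only the trivial solution. -/
theorem slow_rolling_trivial_solution
    (m H₀ : ℝ) (hm : m > 0) (hH : H₀ ≥ 0)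
    (Φ : ℝ → ℝ) (hΦ : ContDiff ℝ 2 Φ)
    (hKG : ∀ t : ℝ, deriv (deriv Φ) t + 3 * H₀ * deriv Φ t + m ^ 2 * Φ t = 0)
    (hEinstein : ∀ t : ℝ,
      3 * H₀ ^ 2 = 8 * Real.pi * ((deriv Φ t) ^ 2 + m ^ 2 * (Φ t) ^ 2)) :
    H₀ = 0 ∧ ∀ t : ℝ, Φ t = 0 := by
  have hd1 : Differentiable ℝ Φ := hΦ.differentiable (by norm_num)
  have hd2 : Differentiable ℝ (deriv Φ) := by
    have h := (contDiff_succ_iff_deriv.mp (show ContDiff ℝ (1 + 1) Φ by exact_mod_cast hΦ)).2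
    exact h.2.differentiable (by norm_num)
  -- The energy is constant, so its derivative vanishes; combined with KG: H₀ * Φ'² = 0
  have key : ∀ t : ℝ, H₀ * (deriv Φ t) ^ 2 = 0 := by
    intro t
    have hE : (fun s => (deriv Φ s) ^ 2 + m ^ 2 * (Φ s) ^ 2) =
        fun _ => 3 * H₀ ^ 2 / (8 * Real.pi) := by
      funext s
      have := hEinstein s
      field_simp
      linarith [this]
    have h1 : HasDerivAt Φ (deriv Φ t) t := hd1.differentiableAt.hasDerivAt
    have h2 : HasDerivAt (deriv Φ) (deriv (deriv Φ) t) t := hd2.differentiableAt.hasDerivAt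
    have hE' : HasDerivAt (fun s => (deriv Φ s) ^ 2 + m ^ 2 * (Φ s) ^ 2)
        (2 * deriv Φ t ^ 1 * deriv (deriv Φ) t + m ^ 2 * (2 * Φ t ^ 1 * deriv Φ t)) t := by
      exact ((h2.pow 2).add ((h1.pow 2).const_mul (m ^ 2)))
    rw [hE] at hE'
    have hzero : (2 * deriv Φ t ^ 1 * deriv (deriv Φ) t + m ^ 2 * (2 * Φ t ^ 1 * deriv Φ t)) = 0 := by
      have := (hasDerivAt_const t (3 * H₀ ^ 2 / (8 * Real.pi))).unique hE'
      linarith [this]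
    have hkg := hKG t
    have h3 : (deriv (deriv Φ) t + 3 * H₀ * deriv Φ t + m ^ 2 * Φ t) * deriv Φ t = 0 := by
      rw [hkg]; ring
    linear_combination h3 / 3 - hzero / 6
  by_cases h0 : H₀ = 0
  · refine ⟨h0, fun t => ?_⟩
    have hE := hEinstein t
    rw [h0] at hE
    have hpi := Real.pi_pos
    have h8 : (8 * Real.pi) ≠ 0 := by positivity
    have hsum : (deriv Φ t) ^ 2 + m ^ 2 * (Φ t) ^ 2 = 0 := by
      have hE0 : 8 * Real.pi * ((deriv Φ t) ^ 2 + m ^ 2 * (Φ t) ^ 2) = 0 := by linarith [hE]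
      rcases mul_eq_zero.mp hE0 with h | h
      · exact absurd h h8
      · exact h
    have hsq : (Φ t) ^ 2 = 0 := by nlinarith [sq_nonneg (deriv Φ t), pow_pos hm 2, sq_nonneg (Φ t)]
    exact pow_eq_zero_iff (n := 2) (by norm_num) |>.mp hsq
  · exfalso
    have hpos : H₀ > 0 := lt_of_le_of_ne hH (Ne.symm h0)
    have hderiv0 : ∀ t : ℝ, deriv Φ t = 0 := by
      intro t
      have := key t
      have h2 : (deriv Φ t) ^ 2 = 0 := by
        rcases mul_eq_zero.mp this with h | h
        · exact absurd h h0
        · exact h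
      exact pow_eq_zero_iff (n := 2) (by norm_num) |>.mp h2
    have hderivfun : deriv Φ = fun _ => (0 : ℝ) := funext hderiv0
    have hdd : ∀ t : ℝ, deriv (deriv Φ) t = 0 := by
      intro t; rw [hderivfun]; simp
    have hΦ0 : ∀ t : ℝ, Φ t = 0 := by
      intro t
      have := hKG t
      rw [hdd t, hderiv0 t] at this
      have hm2 : m ^ 2 > 0 := by positivity
      nlinarith
    have := hEinstein 0
    rw [hΦ0 0, hderiv0 0] at this
    simp at this
    nlinarith [this, sq_nonneg H₀]
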